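/- Let μ = 1 if rank(G₀) = m = n, μ = √2 if rank(G₀) = min(m, n) and m ≠ n, and μ = (1 + √5)/2 if rank(G₀) < min(m, n). Define g(s) = σ − (L_f + L_G)s, α(s) = σ − L_G·s, β(s) = μ·σ⁻¹·L_G·s. Let G₀ = UΣVᵀ be a singular value decomposition with U ∈ ℝ^{n×n} orthogonal with columns η₁, …, ηₙ, let r = rank(G₀), and let Λ(s) ∈ ℝ^{n×n} be the diagonal matrix with entries λᵢ(s) = max{ g(s)/(α(s)‖G₀†ηᵢ‖ + β(s)), g(s), 0 } for i = 1, …, r and λᵢ(s) = 0 for i > r. Suppose x ∈ ℝⁿ satisfies (L_f + L_G)·‖x‖ ≤ σ. Then for every q ∈ ℝⁿ with ‖q‖₁ ≤ 1 and every consistent pair (f̂, Ĝ), there exists u ∈ ℝᵐ with ‖u‖ ≤ 1 such that f₀ + U·Λ(‖x‖)·q = f̂(x) + Ĝ(x)·u; that is, f₀ + U·Λ(‖x‖)·q belongs to the guaranteed velocity set V^G_x. -/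

import Mathlib

open Matrix Set
open scoped RealInnerProductSpace

noncomputable def matOpNorm {n m : ℕ} (M : Matrix (Fin n) (Fin m) ℝ) : ℝ :=
  ‖LinearMap.toContinuousLinearMap (Matrix.toEuclideanLin M)‖

noncomputable def appMat {n m : ℕ} (M : Matrix (Fin n) (Fin m) ℝ)
    (v : EuclideanSpace ℝ (Fin m)) : EuclideanSpace ℝ (Fin n) :=
  Matrix.toEuclideanLin M v

noncomputable def colSpace {n m : ℕ} (M : Matrix (Fin n) (Fin m) ℝ) :
    Submodule ℝ (EuclideanSpace ℝ (Fin n)) :=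
  LinearMap.range (Matrix.toEuclideanLin M)

noncomputable def minSV {n m : ℕ} (M : Matrix (Fin n) (Fin m) ℝ) : ℝ :=
  Real.sqrt (sInf {μ : ℝ | μ ≠ 0 ∧
    ∃ i, (show (Mᵀ * M).IsHermitian by
      simpa using Matrix.isHermitian_conjTranspose_mul_self M).eigenvalues i = μ})

/-- A pair `(fh, Gh)` consistent with the prior knowledge of the dynamics. -/
structure Consistent {n m : ℕ} (R : Matrix (Fin n) (Fin m) ℝ) (Lf LG : ℝ)
    (f₀ : EuclideanSpace ℝ (Fin n)) (G₀ : Matrix (Fin n) (Fin m) ℝ)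
    (fh : EuclideanSpace ℝ (Fin n) → EuclideanSpace ℝ (Fin n))
    (Gh : EuclideanSpace ℝ (Fin n) → Matrix (Fin n) (Fin m) ℝ) : Prop where
  lipf : ∀ y z, ‖fh y - fh z‖ ≤ Lf * ‖y - z‖
  lipG : ∀ y z, matOpNorm (Gh y - Gh z) ≤ LG * ‖y - z‖
  f_zero : fh 0 = f₀
  G_zero : Gh 0 = G₀
  f_im : ∀ y, fh y ∈ colSpace R
  factor : ∃ Hh : EuclideanSpace ℝ (Fin n) → Matrix (Fin m) (Fin m) ℝ,
    IsUnit (Hh 0) ∧ ∀ y, Gh y = R * Hh y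

/-- The guaranteed velocity set at `x`. -/
noncomputable def GVS {n m : ℕ} (R : Matrix (Fin n) (Fin m) ℝ) (Lf LG : ℝ)
    (f₀ : EuclideanSpace ℝ (Fin n)) (G₀ : Matrix (Fin n) (Fin m) ℝ)
    (x : EuclideanSpace ℝ (Fin n)) : Set (EuclideanSpace ℝ (Fin n)) :=
  ⋂ (fh : EuclideanSpace ℝ (Fin n) → EuclideanSpace ℝ (Fin n))
    (Gh : EuclideanSpace ℝ (Fin n) → Matrix (Fin n) (Fin m) ℝ)
    (_ : Consistent R Lf LG f₀ G₀ fh Gh),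
      {w | ∃ u : EuclideanSpace ℝ (Fin m), ‖u‖ ≤ 1 ∧ w = fh x + appMat (Gh x) u}



lemma appMat_apply {n m : ℕ} (M : Matrix (Fin n) (Fin m) ℝ) (v : EuclideanSpace ℝ (Fin m)) (i : Fin n) :
    appMat M v i = M.mulVec v i := rfl

lemma appMat_mul {n m k : ℕ} (A : Matrix (Fin n) (Fin m) ℝ) (B : Matrix (Fin m) (Fin k) ℝ)
    (v : EuclideanSpace ℝ (Fin k)) : appMat (A * B) v = appMat A (appMat B v) := by
  ext i
  show ((A * B) *ᵥ v) i = (A *ᵥ (B *ᵥ v)) i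
  rw [Matrix.mulVec_mulVec]

lemma inner_appMat {n m : ℕ} (M : Matrix (Fin n) (Fin m) ℝ) (v : EuclideanSpace ℝ (Fin m)) (u : EuclideanSpace ℝ (Fin n)) :
    ⟪appMat M v, u⟫ = ⟪v, appMat Mᵀ u⟫ := by
  simp only [PiLp.inner_apply, RCLike.inner_apply, starRingEnd_apply, star_trivial, appMat_apply]
  have : (M *ᵥ v) ⬝ᵥ u = v ⬝ᵥ (Mᵀ *ᵥ u) := by
    rw [Matrix.dotProduct_mulVec, Matrix.vecMul_transpose]
  simpa [dotProduct, mul_comm] using this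

lemma norm_appMat_sq {n m : ℕ} (G : Matrix (Fin n) (Fin m) ℝ) (v : EuclideanSpace ℝ (Fin m)) :
    ‖appMat G v‖ ^ 2 = ⟪v, appMat (Gᵀ * G) v⟫ := by
  rw [appMat_mul, ← inner_appMat, real_inner_self_eq_norm_sq]

lemma minSV_key {n m : ℕ} (G : Matrix (Fin n) (Fin m) ℝ) (hG : G ≠ 0) :
    0 < minSV G ∧ ∀ v ∈ colSpace Gᵀ, minSV G * ‖v‖ ≤ ‖appMat G v‖ := by
  classical
  set hA : (Gᵀ * G).IsHermitian := (by simpa using Matrix.isHermitian_conjTranspose_mul_self G) with hhA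
  set A := Gᵀ * G with hAdef
  have hAc : Gᴴ * G = A := by rw [Matrix.conjTranspose_eq_transpose_of_trivial]
  set lam := hA.eigenvalues with hlam
  set e := hA.eigenvectorBasis with he
  have heig : ∀ j, appMat A (e j) = lam j • e j := by
    intro j
    ext i
    have := congrFun (hA.mulVec_eigenvectorBasis j) i
    simpa [appMat_apply, hAc] using this
  have hnonneg : ∀ j, 0 ≤ lam j := fun j =>
    (Matrix.posSemidef_conjTranspose_mul_self G).eigenvalues_nonneg j
  have hrepr : ∀ (v : EuclideanSpace ℝ (Fin m)) j, e.repr v j = ⟪e j, v⟫ :=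
    fun v j => e.repr_apply_apply v j
  have hsum : ∀ v : EuclideanSpace ℝ (Fin m), (∑ j, e.repr v j • e j) = v :=
    fun v => e.sum_repr v
  have hAv : ∀ v : EuclideanSpace ℝ (Fin m),
      appMat A v = ∑ j, (lam j * e.repr v j) • e j := by
    intro v
    conv_lhs => rw [← hsum v]
    show Matrix.toEuclideanLin A (∑ j, e.repr v j • e j) = _
    rw [map_sum]
    refine Finset.sum_congr rfl fun j _ => ?_
    rw [_root_.map_smul]
    show e.repr v j • appMat A (e j) = _
    rw [heig j, smul_smul, mul_comm]
  have hinner : ∀ v : EuclideanSpace ℝ (Fin m),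
      ⟪v, appMat A v⟫ = ∑ j, lam j * (e.repr v j)^2 := by
    intro v
    rw [hAv v, inner_sum]
    refine Finset.sum_congr rfl fun j _ => ?_
    simp only [real_inner_smul_right, hrepr]
    rw [real_inner_comm v (e j)]
    ring
  have hnorm : ∀ v : EuclideanSpace ℝ (Fin m), ‖v‖^2 = ∑ j, (e.repr v j)^2 := by
    intro v
    have h1 : ⟪(∑ j, e.repr v j • e j : EuclideanSpace ℝ (Fin m)), v⟫ = ⟪v, v⟫ := by
      rw [hsum v]
    rw [← real_inner_self_eq_norm_sq, ← h1, sum_inner]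
    refine Finset.sum_congr rfl fun j _ => ?_
    rw [real_inner_smul_left, ← hrepr]
    ring
  set T := {μ : ℝ | μ ≠ 0 ∧ ∃ i, lam i = μ} with hT
  have hTfin : T.Finite := Set.Finite.subset (Set.finite_range lam)
    (by rintro μ ⟨-, i, hi⟩; exact ⟨i, hi⟩)
  have hTne : T.Nonempty := by
    by_contra h
    rw [Set.not_nonempty_iff_eq_empty] at h
    have hall : ∀ j, lam j = 0 := by
      intro j
      by_contra hj
      have : lam j ∈ T := ⟨hj, j, rfl⟩
      rw [h] at this
      exact this
    apply hG
    have hz : ∀ v : EuclideanSpace ℝ (Fin m), appMat G v = 0 := by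
      intro v
      have h2 : ‖appMat G v‖^2 = 0 := by
        rw [norm_appMat_sq, ← hAdef, hinner]
        simp [hall]
      exact norm_eq_zero.mp (pow_eq_zero_iff (two_ne_zero) |>.mp h2)
    have hz0 : Matrix.toEuclideanLin G = 0 := LinearMap.ext fun v => hz v
    exact (LinearEquiv.map_eq_zero_iff Matrix.toEuclideanLin).mp hz0
  have hInfmem : sInf T ∈ T := hTne.csInf_mem hTfin
  have hInfpos : 0 < sInf T := by
    obtain ⟨hne, i, hi⟩ := hInfmem
    exact lt_of_le_of_ne (hi ▸ hnonneg i) (Ne.symm hne)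
  have hbdd : BddBelow T := hTfin.bddBelow
  have hσ : minSV G = Real.sqrt (sInf T) := rfl
  have hσpos : 0 < minSV G := by rw [hσ]; exact Real.sqrt_pos.mpr hInfpos
  have hσsq : minSV G ^ 2 = sInf T := by rw [hσ]; exact Real.sq_sqrt hInfpos.le
  refine ⟨hσpos, ?_⟩
  intro v hv
  have hker : ∀ j, lam j = 0 → e.repr v j = 0 := by
    intro j hj
    obtain ⟨u, hu⟩ := hv
    have hGej : appMat G (e j) = 0 := by
      have h2 : ‖appMat G (e j)‖^2 = 0 := by
        rw [norm_appMat_sq, ← hAdef, hinner]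
        apply Finset.sum_eq_zero
        intro k _
        rcases eq_or_ne k j with rfl | hkj
        · rw [hj]; ring
        · rw [hrepr, e.orthonormal.2 hkj]; ring
      exact norm_eq_zero.mp (pow_eq_zero_iff (two_ne_zero) |>.mp h2)
    have hvu : v = appMat Gᵀ u := hu.symm
    rw [hrepr, hvu, real_inner_comm, inner_appMat, Matrix.transpose_transpose, hGej,
      inner_zero_right]
  have key : minSV G ^2 * ‖v‖^2 ≤ ‖appMat G v‖^2 := by
    rw [norm_appMat_sq, ← hAdef, hinner, hnorm, hσsq, Finset.mul_sum]
    refine Finset.sum_le_sum fun j _ => ?_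
    rcases eq_or_ne (lam j) 0 with h0 | h0
    · simp [hker j h0, h0]
    · exact mul_le_mul_of_nonneg_right (csInf_le hbdd ⟨h0, j, rfl⟩) (sq_nonneg _)
  calc minSV G * ‖v‖ = Real.sqrt ((minSV G)^2 * ‖v‖^2) := by
        rw [Real.sqrt_mul (sq_nonneg _), Real.sqrt_sq hσpos.le, Real.sqrt_sq (norm_nonneg _)]
    _ ≤ Real.sqrt (‖appMat G v‖^2) := Real.sqrt_le_sqrt key
    _ = ‖appMat G v‖ := Real.sqrt_sq (norm_nonneg _)

lemma appMat_sub {n m : ℕ} (A B : Matrix (Fin n) (Fin m) ℝ) (v : EuclideanSpace ℝ (Fin m)) :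
    appMat (A - B) v = appMat A v - appMat B v := by
  show Matrix.toEuclideanLin (A - B) v = _
  rw [map_sub]; rfl

lemma solve_lemma {n m : ℕ} (G M : Matrix (Fin n) (Fin m) ℝ) (σ δ : ℝ)
    (hσle : ∀ v ∈ colSpace Gᵀ, σ * ‖v‖ ≤ ‖appMat G v‖)
    (hδσ : δ < σ)
    (hEcol : ∀ v, appMat (M - G) v ∈ colSpace G)
    (hEnorm : ∀ v : EuclideanSpace ℝ (Fin m), ‖appMat (M - G) v‖ ≤ δ * ‖v‖)
    (c : EuclideanSpace ℝ (Fin n)) (hc : c ∈ colSpace G) :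
    ∃ u : EuclideanSpace ℝ (Fin m), appMat M u = c ∧ (σ - δ) * ‖u‖ ≤ ‖c‖ := by
  classical
  have hMdecomp : ∀ v : EuclideanSpace ℝ (Fin m),
      appMat M v = appMat G v + appMat (M - G) v := by
    intro v
    have h := appMat_sub M G v
    have : appMat G v + (appMat M v - appMat G v) = appMat G v + appMat (M - G) v := by rw [h]
    simpa using this
  have hMC : ∀ v : colSpace Gᵀ, appMat M (v : EuclideanSpace ℝ (Fin m)) ∈ colSpace G := by
    rintro ⟨v, hv⟩
    rw [hMdecomp]
    exact (colSpace G).add_mem ⟨v, rfl⟩ (hEcol v)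
  let L : colSpace Gᵀ →ₗ[ℝ] colSpace G :=
    LinearMap.codRestrict (colSpace G)
      ((Matrix.toEuclideanLin M).comp (colSpace Gᵀ).subtype) (fun v => hMC v)
  have hlow : ∀ v : colSpace Gᵀ,
      (σ - δ) * ‖(v : EuclideanSpace ℝ (Fin m))‖ ≤ ‖appMat M (v : EuclideanSpace ℝ (Fin m))‖ := by
    intro v
    have h1 := hσle v v.2
    have h2 := hEnorm (v : EuclideanSpace ℝ (Fin m))
    have h3 : ‖appMat G (v : EuclideanSpace ℝ (Fin m))‖
        - ‖appMat (M - G) (v : EuclideanSpace ℝ (Fin m))‖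
        ≤ ‖appMat M (v : EuclideanSpace ℝ (Fin m))‖ := by
      rw [hMdecomp]
      have := norm_add_le (appMat M (v : EuclideanSpace ℝ (Fin m)) -
        appMat G (v : EuclideanSpace ℝ (Fin m))) (appMat G (v : EuclideanSpace ℝ (Fin m)))
      calc ‖appMat G (v : EuclideanSpace ℝ (Fin m))‖
          - ‖appMat (M - G) (v : EuclideanSpace ℝ (Fin m))‖
          ≤ ‖appMat G (v : EuclideanSpace ℝ (Fin m)) + appMat (M - G) (v : EuclideanSpace ℝ (Fin m))‖ := by
            have := norm_add_le (appMat G (v : EuclideanSpace ℝ (Fin m)) +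
              appMat (M - G) (v : EuclideanSpace ℝ (Fin m)))
              (- appMat (M - G) (v : EuclideanSpace ℝ (Fin m)))
            simp only [add_neg_cancel_right, norm_neg] at this
            linarith
        _ = _ := rfl
    linarith
  have hinj : Function.Injective L := by
    rw [← LinearMap.ker_eq_bot, LinearMap.ker_eq_bot']
    intro v hv
    have h0 : appMat M (v : EuclideanSpace ℝ (Fin m)) = 0 := congrArg Subtype.val hv
    have := hlow v
    rw [h0, norm_zero] at this
    have hv0 : ‖(v : EuclideanSpace ℝ (Fin m))‖ = 0 := by
      by_contra hne
      have : 0 < ‖(v : EuclideanSpace ℝ (Fin m))‖ :=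
        lt_of_le_of_ne (norm_nonneg _) (Ne.symm hne)
      nlinarith
    ext1
    simpa using norm_eq_zero.mp hv0
  have hfr : Module.finrank ℝ (colSpace Gᵀ) = Module.finrank ℝ (colSpace G) := by
    show Module.finrank ℝ (LinearMap.range (Matrix.toLin (PiLp.basisFun _ ℝ _) (PiLp.basisFun _ ℝ _) Gᵀ)) = Module.finrank ℝ (LinearMap.range (Matrix.toLin (PiLp.basisFun _ ℝ _) (PiLp.basisFun _ ℝ _) G))
    rw [← Matrix.rank_eq_finrank_range_toLin, ← Matrix.rank_eq_finrank_range_toLin]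
    exact Matrix.rank_transpose G
  have hsurj : Function.Surjective L :=
    (LinearMap.injective_iff_surjective_of_finrank_eq_finrank hfr).mp hinj
  obtain ⟨u, hu⟩ := hsurj ⟨c, hc⟩
  refine ⟨u, congrArg Subtype.val hu, ?_⟩
  have h1 := hlow u
  have h2 : appMat M (u : EuclideanSpace ℝ (Fin m)) = c := congrArg Subtype.val hu
  rw [h2] at h1
  exact h1

lemma mem_colSpace_mul {n m k : ℕ} (A : Matrix (Fin n) (Fin m) ℝ) (B : Matrix (Fin m) (Fin k) ℝ)
    (v : EuclideanSpace ℝ (Fin k)) : appMat (A * B) v ∈ colSpace A :=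
  ⟨appMat B v, (appMat_mul A B v).symm⟩

lemma colSpace_mul_unit {n m : ℕ} (R : Matrix (Fin n) (Fin m) ℝ)
    (H : Matrix (Fin m) (Fin m) ℝ) (hH : IsUnit H) : colSpace (R * H) = colSpace R := by
  apply le_antisymm
  · rintro _ ⟨v, rfl⟩
    exact ⟨appMat H v, (appMat_mul R H v).symm⟩
  · rintro _ ⟨v, rfl⟩
    refine ⟨appMat (↑hH.unit⁻¹ : Matrix (Fin m) (Fin m) ℝ) v, ?_⟩
    show appMat (R * H) (appMat (↑hH.unit⁻¹ : Matrix (Fin m) (Fin m) ℝ) v) = appMat R v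
    rw [← appMat_mul]
    have hinv : H * (↑hH.unit⁻¹ : Matrix (Fin m) (Fin m) ℝ) = 1 := by
      have := hH.unit.mul_inv
      rwa [hH.unit_spec] at this
    have hmat : R * H * (↑hH.unit⁻¹ : Matrix (Fin m) (Fin m) ℝ) = R := by
      rw [Matrix.mul_assoc, hinv, Matrix.mul_one]
    rw [hmat]

lemma appMat_expand {n m : ℕ} (U : Matrix (Fin n) (Fin m) ℝ) (d : EuclideanSpace ℝ (Fin m))
    (η : Fin m → EuclideanSpace ℝ (Fin n)) (hη : ∀ i j, η i j = U j i) :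
    appMat U d = ∑ j, d j • η j := by
  have hd : d = ∑ j, d j • EuclideanSpace.single j (1:ℝ) := by
    ext k
    rw [WithLp.ofLp_sum, Finset.sum_apply]
    simp [EuclideanSpace.single_apply]
  calc appMat U d = Matrix.toEuclideanLin U d := rfl
    _ = ∑ j, d j • Matrix.toEuclideanLin U (EuclideanSpace.single j 1) := by
        conv_lhs => rw [hd]
        rw [map_sum]
        exact Finset.sum_congr rfl fun j _ => by rw [_root_.map_smul]
    _ = ∑ j, d j • η j := by
        refine Finset.sum_congr rfl fun j _ => ?_
        congr 1
        ext k
        show (U *ᵥ (EuclideanSpace.single j (1:ℝ))) k = η j k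
        rw [hη]
        simp [Matrix.mulVec, dotProduct, EuclideanSpace.single_apply]

set_option maxHeartbeats 2000000 in
/-- **Theorem 4, velocity part.** With `G₀ = U S Vᵀ` a singular value
decomposition (`U`, `V` orthogonal, `S` rectangular-diagonal with nonnegative,
nonincreasing diagonal entries), `r = rank G₀`, and `Λ(s)` the diagonal matrix of the
`λᵢ(s)`, for `(L_f + L_G)‖x‖ ≤ σ` and every `q` with `‖q‖₁ ≤ 1`, the point
`f₀ + U Λ(‖x‖) q` is achieved by every consistent pair with an admissible control,
i.e. it belongs to the GVS at `x`.  Here `G₀† ηᵢ` is formalized as the unique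
`w i ∈ Im G₀ᵀ` with `G₀ (w i) = ηᵢ`, `ηᵢ` being the `i`-th column of `U`. -/
theorem theorem4_polytope_velocities {n m : ℕ} (R : Matrix (Fin n) (Fin m) ℝ)
    (Lf LG : ℝ) (hLf : 0 < Lf) (hLG : 0 < LG)
    (f₀ : EuclideanSpace ℝ (Fin n)) (hf₀ : f₀ ∈ colSpace R)
    (H₀ : Matrix (Fin m) (Fin m) ℝ) (hH₀ : IsUnit H₀)
    (G₀ : Matrix (Fin n) (Fin m) ℝ) (hG₀fac : G₀ = R * H₀) (hG₀ : G₀ ≠ 0)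
    (μ : ℝ)
    (hμ : μ = if G₀.rank = m ∧ m = n then 1
      else if G₀.rank = min m n then Real.sqrt 2
      else (1 + Real.sqrt 5) / 2)
    (g α β : ℝ → ℝ)
    (hg : ∀ s, g s = minSV G₀ - (Lf + LG) * s)
    (hα : ∀ s, α s = minSV G₀ - LG * s)
    (hβ : ∀ s, β s = μ * (minSV G₀)⁻¹ * (LG * s))
    -- a singular value decomposition `G₀ = U * S * Vᵀ`
    (U : Matrix (Fin n) (Fin n) ℝ) (hU : Uᵀ * U = 1)
    (V : Matrix (Fin m) (Fin m) ℝ) (hV : Vᵀ * V = 1)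
    (S : Matrix (Fin n) (Fin m) ℝ) (hSVD : G₀ = U * S * Vᵀ)
    (hSdiag : ∀ (i : Fin n) (j : Fin m), (i : ℕ) ≠ (j : ℕ) → S i j = 0)
    (hSnonneg : ∀ (i : Fin n) (j : Fin m), 0 ≤ S i j)
    (hSmono : ∀ (i i' : Fin n) (j j' : Fin m), (i : ℕ) = (j : ℕ) →
      (i' : ℕ) = (j' : ℕ) → (i : ℕ) ≤ (i' : ℕ) → S i' j' ≤ S i j)
    -- the columns `ηᵢ` of `U` and the minimal-norm solutions `w i` of `G₀ w = ηᵢ`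
    (η : Fin n → EuclideanSpace ℝ (Fin n)) (hη : ∀ i j, η i j = U j i)
    (w : Fin n → EuclideanSpace ℝ (Fin m))
    (hw : ∀ i : Fin n, (i : ℕ) < G₀.rank →
      w i ∈ colSpace G₀ᵀ ∧ appMat G₀ (w i) = η i)
    (lam : Fin n → ℝ → ℝ)
    (hlam : ∀ (i : Fin n) (s : ℝ), lam i s =
      if (i : ℕ) < G₀.rank then
        max (max (g s / (α s * ‖w i‖ + β s)) (g s)) 0
      else 0)
    (x : EuclideanSpace ℝ (Fin n)) (hx : (Lf + LG) * ‖x‖ ≤ minSV G₀) :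
    ∀ q : EuclideanSpace ℝ (Fin n), (∑ i, |q i|) ≤ 1 →
      ∀ fh Gh, Consistent R Lf LG f₀ G₀ fh Gh →
        ∃ u : EuclideanSpace ℝ (Fin m), ‖u‖ ≤ 1 ∧
          f₀ + appMat U (appMat (Matrix.diagonal fun i => lam i ‖x‖) q)
            = fh x + appMat (Gh x) u := by

  classical
  -- abbreviations
  set s := ‖x‖ with hs
  set σ := minSV G₀ with hσdef
  obtain ⟨hσpos, hσle⟩ := minSV_key G₀ hG₀
  have hs0 : 0 ≤ s := norm_nonneg x
  have hgs0 : 0 ≤ σ - (Lf + LG) * s := by linarith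
  have hδσ : LG * s < σ := by
    rcases eq_or_lt_of_le hs0 with h0 | h0
    · rw [← h0]; simpa using hσpos
    · nlinarith
  have hμ1 : 1 ≤ μ := by
    rw [hμ]
    split_ifs
    · norm_num
    · nlinarith [Real.sq_sqrt (by norm_num : (0:ℝ) ≤ 2), Real.sqrt_nonneg 2]
    · nlinarith [Real.sq_sqrt (by norm_num : (0:ℝ) ≤ 5), Real.sqrt_nonneg 5]
  -- unit norm columns
  have hη1 : ∀ i, ‖η i‖ = 1 := by
    intro i
    have h2 : ‖η i‖ ^ 2 = 1 := by
      rw [← real_inner_self_eq_norm_sq]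
      have hUi := congrFun (congrFun hU i) i
      simp only [Matrix.mul_apply, Matrix.transpose_apply, Matrix.one_apply_eq] at hUi
      rw [PiLp.inner_apply]
      simp only [RCLike.inner_apply, starRingEnd_apply, star_trivial]
      rw [← hUi]
      exact Finset.sum_congr rfl fun k _ => by rw [hη]
    have h3 := Real.sqrt_sq (norm_nonneg (η i))
    rw [h2, Real.sqrt_one] at h3
    exact h3.symm
  intro q hq fh Gh cons
  -- column space identifications
  have hRG : colSpace G₀ = colSpace R := by
    rw [hG₀fac]; exact colSpace_mul_unit R H₀ hH₀
  obtain ⟨Hh, hHh0, hHfac⟩ := cons.factor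
  set M := Gh x with hM
  have hG₀Hh : G₀ = R * Hh 0 := by rw [← cons.G_zero, hHfac 0]
  have hEfac : M - G₀ = R * (Hh x - Hh 0) := by
    rw [hM, hHfac x, hG₀Hh, Matrix.mul_sub]
  have hEcol : ∀ v, appMat (M - G₀) v ∈ colSpace G₀ := by
    intro v
    rw [hRG, hEfac]
    exact mem_colSpace_mul R (Hh x - Hh 0) v
  have hEnorm : ∀ v : EuclideanSpace ℝ (Fin m), ‖appMat (M - G₀) v‖ ≤ (LG * s) * ‖v‖ := by
    intro v
    have h := cons.lipG x 0
    rw [cons.G_zero, sub_zero] at h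
    have h2 : ‖appMat (M - G₀) v‖ ≤ matOpNorm (M - G₀) * ‖v‖ :=
      (LinearMap.toContinuousLinearMap (Matrix.toEuclideanLin (M - G₀))).le_opNorm v
    calc ‖appMat (M - G₀) v‖ ≤ matOpNorm (M - G₀) * ‖v‖ := h2
      _ ≤ (LG * s) * ‖v‖ := mul_le_mul_of_nonneg_right h (norm_nonneg v)
  -- solve for the drift part
  have hc₀ : f₀ - fh x ∈ colSpace G₀ := by
    rw [hRG]; exact (colSpace R).sub_mem hf₀ (cons.f_im x)
  have hc₀norm : ‖f₀ - fh x‖ ≤ Lf * s := by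
    have h := cons.lipf 0 x
    rw [cons.f_zero, zero_sub, norm_neg] at h
    exact h
  obtain ⟨u₀, hu₀, hu₀n⟩ := solve_lemma G₀ M σ (LG * s) hσle hδσ hEcol hEnorm (f₀ - fh x) hc₀
  -- solve for the correction terms
  have hsolve : ∀ i : Fin n, (i : ℕ) < G₀.rank →
      ∃ v : EuclideanSpace ℝ (Fin m), appMat M v = appMat (M - G₀) (w i) ∧
        (σ - LG * s) * ‖v‖ ≤ ‖appMat (M - G₀) (w i)‖ := fun i _ =>
    solve_lemma G₀ M σ (LG * s) hσle hδσ hEcol hEnorm _ (hEcol (w i))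
  choose v hv1 hv2 using hsolve
  set Ui : Fin n → EuclideanSpace ℝ (Fin m) :=
    fun i => if h : (i : ℕ) < G₀.rank then w i - v i h else 0 with hUi
  -- decomposition of M
  have hMdec : ∀ z : EuclideanSpace ℝ (Fin m), appMat M z = appMat G₀ z + appMat (M - G₀) z := by
    intro z
    have h := appMat_sub M G₀ z
    have h2 : appMat G₀ z + (appMat M z - appMat G₀ z) = appMat G₀ z + appMat (M - G₀) z := by
      rw [h]
    simpa using h2
  have hMUi : ∀ i : Fin n, ∀ h : (i : ℕ) < G₀.rank, appMat M (Ui i) = η i := by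
    intro i hi
    have hwi := hw i hi
    have : Ui i = w i - v i hi := dif_pos hi
    rw [this]
    show Matrix.toEuclideanLin M (w i - v i hi) = η i
    rw [map_sub]
    show appMat M (w i) - appMat M (v i hi) = η i
    rw [hv1 i hi, hMdec (w i), hwi.2]
    abel
  have hUin : ∀ i : Fin n, ∀ _ : (i : ℕ) < G₀.rank, (σ - LG * s) * ‖Ui i‖ ≤ σ * ‖w i‖ := by
    intro i hi
    have h1 : Ui i = w i - v i hi := dif_pos hi
    have h2 : ‖Ui i‖ ≤ ‖w i‖ + ‖v i hi‖ := by rw [h1]; exact norm_sub_le _ _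
    have h3 := hv2 i hi
    have h4 := hEnorm (w i)
    nlinarith [norm_nonneg (v i hi), norm_nonneg (w i)]
  -- the key coefficient bound
  have hw1 : ∀ i : Fin n, ∀ _ : (i : ℕ) < G₀.rank, σ * ‖w i‖ ≤ 1 := by
    intro i hi
    have h := hσle (w i) (hw i hi).1
    rw [(hw i hi).2, hη1 i] at h
    exact h
  have hwpos : ∀ i : Fin n, ∀ _ : (i : ℕ) < G₀.rank, 0 < ‖w i‖ := by
    intro i hi
    rcases eq_or_lt_of_le (norm_nonneg (w i)) with h0 | h0
    · exfalso
      have hwz : w i = 0 := norm_eq_zero.mp h0.symm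
      have h2 := (hw i hi).2
      rw [hwz] at h2
      have hz : appMat G₀ (0 : EuclideanSpace ℝ (Fin m)) = 0 := map_zero (Matrix.toEuclideanLin G₀)
      rw [hz] at h2
      have h3 := hη1 i
      rw [← h2] at h3
      simp at h3
    · exact h0
  have hcrux : ∀ i : Fin n, ∀ _ : (i : ℕ) < G₀.rank,
      lam i s * (σ * ‖w i‖) ≤ σ - (Lf + LG) * s := by
    intro i hi
    have hK1 := hw1 i hi
    have hKpos : 0 < σ * ‖w i‖ := mul_pos hσpos (hwpos i hi)
    have hwinv : ‖w i‖ ≤ σ⁻¹ := by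
      rw [← one_div]
      rw [le_div_iff₀ hσpos]
      linarith [hK1, mul_comm σ ‖w i‖]
    have hKD : σ * ‖w i‖ ≤ α s * ‖w i‖ + β s := by
      rw [hα, hβ]
      have h1 : LG * s * ‖w i‖ ≤ LG * s * σ⁻¹ :=
        mul_le_mul_of_nonneg_left hwinv (by positivity)
      have h2 : LG * s * σ⁻¹ ≤ μ * σ⁻¹ * (LG * s) := by
        nlinarith [inv_nonneg.mpr hσpos.le, mul_nonneg (mul_nonneg hLG.le hs0) (inv_nonneg.mpr hσpos.le)]
      nlinarith
    have hD0 : 0 < α s * ‖w i‖ + β s := lt_of_lt_of_le hKpos hKD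
    rw [hlam i s, if_pos hi, hg]
    set gs := σ - (Lf + LG) * s with hgsdef
    have hb1 : (gs / (α s * ‖w i‖ + β s)) * (σ * ‖w i‖) ≤ gs := by
      have h5 : (gs / (α s * ‖w i‖ + β s)) * (σ * ‖w i‖)
          ≤ (gs / (α s * ‖w i‖ + β s)) * (α s * ‖w i‖ + β s) :=
        mul_le_mul_of_nonneg_left hKD (div_nonneg hgs0 hD0.le)
      rwa [div_mul_cancel₀ _ hD0.ne'] at h5
    have hb2 : gs * (σ * ‖w i‖) ≤ gs := by nlinarith
    rw [max_mul_of_nonneg _ _ hKpos.le, max_mul_of_nonneg _ _ hKpos.le]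
    refine max_le (max_le hb1 hb2) ?_
    simpa using hgs0
  -- lambda nonneg
  have hlamnn : ∀ i : Fin n, 0 ≤ lam i s := by
    intro i
    rw [hlam i s]
    split_ifs
    · exact le_max_right _ _
    · exact le_refl _
  have hlamzero : ∀ i : Fin n, ¬ (i : ℕ) < G₀.rank → lam i s = 0 := by
    intro i hi
    rw [hlam i s, if_neg hi]
  -- the control
  set u : EuclideanSpace ℝ (Fin m) := u₀ + ∑ i, (lam i s * q i) • Ui i with hu
  refine ⟨u, ?_, ?_⟩
  · -- norm bound
    have hnorm1 : ‖u‖ ≤ ‖u₀‖ + ∑ i, |lam i s * q i| * ‖Ui i‖ := by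
      rw [hu]
      refine le_trans (norm_add_le _ _) ?_
      gcongr
      refine le_trans (norm_sum_le _ _) ?_
      refine Finset.sum_le_sum fun i _ => ?_
      rw [norm_smul, Real.norm_eq_abs]
    have hterm : ∀ i : Fin n, (σ - LG * s) * (|lam i s * q i| * ‖Ui i‖)
        ≤ (σ - (Lf + LG) * s) * |q i| := by
      intro i
      by_cases hi : (i : ℕ) < G₀.rank
      · have habs : |lam i s * q i| = lam i s * |q i| := by
          rw [abs_mul, abs_of_nonneg (hlamnn i)]
        rw [habs]
        have h1 := hUin i hi
        have h2 := hcrux i hi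
        have h3 := abs_nonneg (q i)
        have h4 := hlamnn i
        have h5 : 0 ≤ σ - LG * s := by linarith
        nlinarith [norm_nonneg (Ui i), mul_nonneg h4 h3, mul_nonneg (mul_nonneg h4 h3) (norm_nonneg (Ui i))]
      · rw [hlamzero i hi]
        simp
        positivity
    have hsumb : ∑ i, (σ - (Lf + LG) * s) * |q i| ≤ σ - (Lf + LG) * s := by
      rw [← Finset.mul_sum]
      nlinarith
    have htot : (σ - LG * s) * ‖u‖ ≤ σ - LG * s := by
      calc (σ - LG * s) * ‖u‖
          ≤ (σ - LG * s) * (‖u₀‖ + ∑ i, |lam i s * q i| * ‖Ui i‖) := by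
            have h5 : 0 ≤ σ - LG * s := by linarith
            exact mul_le_mul_of_nonneg_left hnorm1 h5
        _ = (σ - LG * s) * ‖u₀‖ + ∑ i, (σ - LG * s) * (|lam i s * q i| * ‖Ui i‖) := by
            rw [mul_add, Finset.mul_sum]
        _ ≤ Lf * s + ∑ i, (σ - (Lf + LG) * s) * |q i| := by
            have hA : (σ - LG * s) * ‖u₀‖ ≤ Lf * s := le_trans hu₀n hc₀norm
            have hB : ∑ i, (σ - LG * s) * (|lam i s * q i| * ‖Ui i‖)
                ≤ ∑ i, (σ - (Lf + LG) * s) * |q i| :=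
              Finset.sum_le_sum fun i _ => hterm i
            linarith
        _ ≤ Lf * s + (σ - (Lf + LG) * s) := by linarith [hsumb]
        _ = σ - LG * s := by ring
    have h6 : 0 < σ - LG * s := by linarith
    nlinarith
  · -- the equation
    have hULq : appMat U (appMat (Matrix.diagonal fun i => lam i ‖x‖) q)
        = ∑ i, (lam i s * q i) • η i := by
      have hd : ∀ j, appMat (Matrix.diagonal fun i => lam i ‖x‖) q j = lam j s * q j := by
        intro j
        rw [appMat_apply, Matrix.mulVec_diagonal]
      rw [appMat_expand U _ η hη]
      exact Finset.sum_congr rfl fun j _ => by rw [hd j]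
    have hMu : appMat M u = appMat M u₀ + ∑ i, (lam i s * q i) • appMat M (Ui i) := by
      rw [hu]
      show Matrix.toEuclideanLin M (u₀ + ∑ i, (lam i s * q i) • Ui i) = _
      rw [map_add, map_sum]
      congr 1
      exact Finset.sum_congr rfl fun i _ => by rw [_root_.map_smul]; rfl
    have hMu2 : appMat M u = (f₀ - fh x) + ∑ i, (lam i s * q i) • η i := by
      rw [hMu, hu₀]
      congr 1
      refine Finset.sum_congr rfl fun i _ => ?_
      by_cases hi : (i : ℕ) < G₀.rank
      · rw [hMUi i hi]
      · rw [hlamzero i hi]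
        simp
    rw [hULq, hMu2]
    abel
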